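/- Let R be a commutative Noetherian local ring of depth t, M a finitely generated R-module, and r an integer with 0 ≤ r ≤ t such that, in case r < t, Ext_R^i(M, R) = 0 for all 1 ≤ i ≤ t − r. Let N be a nonzero finitely generated R-module with pd_R N ≤ t − r. Then Tor_j^R(Hom_R(M, R), N) = 0 for all j > 0, and the natural evaluation map Hom_R(M, R) ⊗_R N → Hom_R(M, N), sending f ⊗ n to the homomorphism m ↦ f(m)·n, is an isomorphism of R-modules. -/

import Mathlib

open CategoryTheory

universe u

noncomputable section

open Classical IsLocalRing in
/-- The depth of a module `M` over a local ring `R`: the supremum of the lengths of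
`M`-regular sequences contained in the maximal ideal, with the convention that the
depth of the zero module is `∞`. -/
def moduleDepth (R : Type u) [CommRing R] [IsLocalRing R]
    (M : Type*) [AddCommGroup M] [Module R M] : ℕ∞ :=
  if Subsingleton M then ⊤
  else sSup {n : ℕ∞ | ∃ rs : List R, (∀ r ∈ rs, r ∈ maximalIdeal R) ∧
    RingTheory.Sequence.IsRegular M rs ∧ (rs.length : ℕ∞) = n}

/-- A Noetherian local ring is Cohen–Macaulay if its depth equals its Krull dimension. -/
def IsCohenMacaulayLocalRing (R : Type u) [CommRing R] [IsLocalRing R] : Prop :=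
  ringKrullDim R = (moduleDepth R R : WithBot ℕ∞)

/-- A (not necessarily local) ring is Cohen–Macaulay if all its localizations at primes are
Cohen–Macaulay local rings. -/
def IsCohenMacaulayRing (S : Type u) [CommRing S] : Prop :=
  ∀ (q : Ideal S) [q.IsPrime], IsCohenMacaulayLocalRing (Localization.AtPrime q)

open IsLocalRing in
/-- A local ring is regular if its maximal ideal is generated by `dim R` elements. -/
def IsRegularLocalRing' (R : Type u) [CommRing R] [IsLocalRing R] : Prop :=
  ∃ s : Finset R, Ideal.span (s : Set R) = maximalIdeal R ∧
    (s.card : WithBot ℕ∞) = ringKrullDim R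

/-- `M` has projective dimension `< n` over `R`: it admits a projective resolution that
vanishes in degrees `≥ n`. -/
def HasProjDimLT (R : Type u) [CommRing R] (M : Type u) [AddCommGroup M] [Module R M]
    (n : ℕ) : Prop :=
  ∃ P : ProjectiveResolution (ModuleCat.of R M), ∀ i, n ≤ i → Limits.IsZero (P.complex.X i)

/-- `M` has projective dimension `≤ n` over `R`. -/
def HasProjDimLE (R : Type u) [CommRing R] (M : Type u) [AddCommGroup M] [Module R M]
    (n : ℕ) : Prop :=
  HasProjDimLT R M (n + 1)

/-- `M` has finite projective dimension over `R`. -/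
def HasFiniteProjDim (R : Type u) [CommRing R] (M : Type u) [AddCommGroup M] [Module R M] :
    Prop :=
  ∃ n, HasProjDimLE R M n

/-- `M` has injective dimension `< n` over `R`: it admits an injective resolution that
vanishes in degrees `≥ n`. -/
def HasInjDimLT (R : Type u) [CommRing R] (M : Type u) [AddCommGroup M] [Module R M]
    (n : ℕ) : Prop :=
  ∃ I : InjectiveResolution (ModuleCat.of R M), ∀ i, n ≤ i → Limits.IsZero (I.cocomplex.X i)

/-- `M` has injective dimension `≤ n` over `R`. -/
def HasInjDimLE (R : Type u) [CommRing R] (M : Type u) [AddCommGroup M] [Module R M]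
    (n : ℕ) : Prop :=
  HasInjDimLT R M (n + 1)

/-- `M` has finite injective dimension over `R`. -/
def HasFiniteInjDim (R : Type u) [CommRing R] (M : Type u) [AddCommGroup M] [Module R M] :
    Prop :=
  ∃ n, HasInjDimLE R M n

/-- The projective dimension of `M` over `R`, as an element of `ℕ∞` (equal to `⊤` when
the projective dimension is infinite). -/
def projDim (R : Type u) [CommRing R] (M : Type u) [AddCommGroup M] [Module R M] : ℕ∞ :=
  sInf {n : ℕ∞ | ∃ m : ℕ, (m : ℕ∞) = n ∧ HasProjDimLE R M m}

/-- The injective dimension of `M` over `R`, as an element of `ℕ∞` (equal to `⊤` when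
the injective dimension is infinite). -/
def injDim (R : Type u) [CommRing R] (M : Type u) [AddCommGroup M] [Module R M] : ℕ∞ :=
  sInf {n : ℕ∞ | ∃ m : ℕ, (m : ℕ∞) = n ∧ HasInjDimLE R M m}

/-- Vanishing of `Ext_R^i(M, N)`. -/
abbrev extVanish (R : Type u) [CommRing R] (M N : Type u)
    [AddCommGroup M] [Module R M] [AddCommGroup N] [Module R N] (i : ℕ) : Prop :=
  Subsingleton (((Ext R (ModuleCat.{u} R) i).obj
    (Opposite.op (ModuleCat.of R M))).obj (ModuleCat.of R N))

/-- Vanishing of `Tor^R_i(M, N)`. -/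
abbrev torVanish (R : Type u) [CommRing R] (M N : Type u)
    [AddCommGroup M] [Module R M] [AddCommGroup N] [Module R N] (i : ℕ) : Prop :=
  Subsingleton (((Tor (ModuleCat.{u} R) i).obj (ModuleCat.of R M)).obj (ModuleCat.of R N))

/-- The Krull dimension of the support of a module. -/
def moduleSupportDim (R : Type u) [CommRing R] (M : Type u) [AddCommGroup M] [Module R M] :
    WithBot ℕ∞ :=
  Order.krullDim (Module.support R M)

/-- The Serre-type condition `(S̃_n)`:
`depth_{R_p} M_p ≥ min {n, depth R_p}` for every prime `p` of `R`. -/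
def SerreCondTilde (R : Type u) [CommRing R] (M : Type u) [AddCommGroup M] [Module R M]
    (n : ℕ) : Prop :=
  ∀ (p : Ideal R) [p.IsPrime],
    min (n : ℕ∞) (moduleDepth (Localization.AtPrime p) (Localization.AtPrime p)) ≤
      moduleDepth (Localization.AtPrime p) (LocalizedModule p.primeCompl M)

/-- A module `X` over a ring `S` is maximal Cohen–Macaulay if for every prime `q` of `S`
the localization `X_q` is either zero or has depth equal to `dim S_q`. -/
def IsMaximalCohenMacaulay (S : Type u) [CommRing S] (X : Type u)
    [AddCommGroup X] [Module S X] : Prop :=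
  ∀ (q : Ideal S) [q.IsPrime],
    Subsingleton (LocalizedModule q.primeCompl X) ∨
      (moduleDepth (Localization.AtPrime q) (LocalizedModule q.primeCompl X) : WithBot ℕ∞) =
        ringKrullDim (Localization.AtPrime q)

/-- A module `X` over a ring `S` is locally free on `Spec S ∖ Max S` if `X_q` is free over
`S_q` for every non-maximal prime `q` of `S`. -/
def IsLocallyFreeOffMaximal (S : Type u) [CommRing S] (X : Type u)
    [AddCommGroup X] [Module S X] : Prop :=
  ∀ (q : Ideal S) [q.IsPrime], ¬ q.IsMaximal →
    Module.Free (Localization.AtPrime q) (LocalizedModule q.primeCompl X)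

end

namespace Statement13

open CategoryTheory Limits

variable {R : Type u} [CommRing R]

lemma subsingleton_of_isZero {X : ModuleCat.{u} R} (h : IsZero X) : Subsingleton X :=
  ⟨fun a b => by
    have h1 : (𝟙 X : X ⟶ X) = 0 := h.eq_of_src _ _
    have ha : a = (𝟙 X : X ⟶ X) a := rfl
    have hb : b = (𝟙 X : X ⟶ X) b := rfl
    rw [ha, hb, h1]
    rfl⟩

/-- Concrete projective resolution data for a module `N`. -/
structure ResData (N : Type u) [AddCommGroup N] [Module R N] : Type (u + 1) where
  A : ℕ → ModuleCat.{u} R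
  d : ∀ i : ℕ, A (i + 1) ⟶ A i
  ε : A 0 ⟶ ModuleCat.of R N
  proj : ∀ i, Projective (A i)
  surj : Function.Surjective ε
  ker0 : LinearMap.ker ε.hom = LinearMap.range (d 0).hom
  exact : ∀ i, LinearMap.ker (d i).hom = LinearMap.range (d (i + 1)).hom

variable {N : Type u} [AddCommGroup N] [Module R N]

def ResData.Bounded (D : ResData (R := R) N) (q : ℕ) : Prop :=
  ∀ i, q + 1 ≤ i → Subsingleton (D.A i)

/-- `pdLE q N`: `N` admits a projective resolution of length `≤ q`. -/
def pdLE (R : Type u) [CommRing R] (q : ℕ) (N : Type u) [AddCommGroup N] [Module R N] : Prop :=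
  ∃ D : ResData (R := R) N, D.Bounded q

/-- The augmentation as a linear map with codomain literally `N`. -/
def ResData.eps (D : ResData (R := R) N) : (D.A 0 : Type u) →ₗ[R] N := D.ε.hom

@[simp] lemma ResData.eps_apply (D : ResData (R := R) N) (x : D.A 0) :
    D.eps x = D.ε x := rfl

lemma ResData.eps_d (D : ResData (R := R) N) (x : D.A 1) : D.ε (D.d 0 x) = 0 := by
  have : D.d 0 x ∈ LinearMap.range (D.d 0).hom := ⟨x, rfl⟩
  rw [← D.ker0] at this
  exact this

lemma ResData.d_d (D : ResData (R := R) N) (i : ℕ) (x : D.A (i + 2)) :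
    D.d i (D.d (i + 1) x) = 0 := by
  have : D.d (i + 1) x ∈ LinearMap.range (D.d (i + 1)).hom := ⟨x, rfl⟩
  rw [← D.exact i] at this
  exact this

/-- The shift (syzygy) of resolution data. -/
def ResData.shift (D : ResData (R := R) N) : ResData (R := R) (LinearMap.ker D.ε.hom) where
  A i := D.A (i + 1)
  d i := D.d (i + 1)
  ε := ModuleCat.ofHom ((D.d 0).hom.codRestrict (LinearMap.ker D.ε.hom)
        (fun x => LinearMap.mem_ker.2 (D.eps_d x)))
  proj i := D.proj (i + 1)
  surj := by
    rintro ⟨y, hy⟩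
    rw [D.ker0] at hy
    obtain ⟨x, hx⟩ := hy
    exact ⟨x, Subtype.ext hx⟩
  ker0 := (LinearMap.ker_codRestrict _ _ _).trans (D.exact 0)
  exact i := D.exact (i + 1)

lemma ResData.shift_bounded {D : ResData (R := R) N} {q : ℕ} (h : D.Bounded (q + 1)) :
    D.shift.Bounded q := fun i hi => h (i + 1) (by omega)

lemma pdLE_congr {N' : Type u} [AddCommGroup N'] [Module R N'] (e : N ≃ₗ[R] N')
    (h : pdLE R q N) : pdLE R q N' := by
  obtain ⟨D, hD⟩ := h
  refine ⟨{ A := D.A, d := D.d,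
            ε := ModuleCat.ofHom ((e : N →ₗ[R] N') ∘ₗ D.ε.hom),
            proj := D.proj,
            surj := e.surjective.comp D.surj,
            ker0 := by
              rw [← D.ker0]
              ext x
              simp only [LinearMap.mem_ker, ModuleCat.hom_ofHom, LinearMap.comp_apply]
              show e (D.ε x) = 0 ↔ D.ε x = 0
              exact e.map_eq_zero_iff
            exact := D.exact }, hD⟩

lemma pdLE_shift {q : ℕ} (D : ResData (R := R) N) (h : D.Bounded (q + 1)) :
    pdLE R q (LinearMap.ker D.ε.hom) := ⟨D.shift, D.shift_bounded h⟩

lemma pdLE_syzygy : ∀ (j : ℕ) {N : Type u} [AddCommGroup N] [Module R N]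
    (D : ResData (R := R) N) (k : ℕ), D.Bounded k → j < k →
    pdLE R (k - (j + 1)) (LinearMap.range (D.d j).hom)
  | 0, N, _, _, D, k, hB, hj => by
    obtain ⟨k, rfl⟩ : ∃ k', k = k' + 1 := ⟨k - 1, by omega⟩
    have h1 : pdLE R k (LinearMap.ker D.ε.hom) := pdLE_shift D hB
    have e : LinearMap.ker D.ε.hom ≃ₗ[R] LinearMap.range (D.d 0).hom := LinearEquiv.ofEq _ _ D.ker0
    simpa using pdLE_congr e h1
  | (j + 1), N, _, _, D, k, hB, hj => by
    obtain ⟨k, rfl⟩ : ∃ k', k = k' + 1 := ⟨k - 1, by omega⟩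
    have := pdLE_syzygy j D.shift k (D.shift_bounded hB) (by omega)
    have harith : k - (j + 1) = k + 1 - (j + 1 + 1) := by omega
    rw [harith] at this
    exact this

end Statement13
namespace Statement13

open CategoryTheory Limits

variable {R : Type u} [CommRing R]
variable {N : Type u} [AddCommGroup N] [Module R N]

/-- The chain complex underlying resolution data. -/
def ResData.cx (D : ResData (R := R) N) : ChainComplex (ModuleCat.{u} R) ℕ :=
  ChainComplex.of D.A D.d (fun n => by
    ext x
    show D.d n (D.d (n + 1) x) = 0
    exact D.d_d n x)

@[simp] lemma ResData.cx_X (D : ResData (R := R) N) (i : ℕ) : D.cx.X i = D.A i := rfl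

@[simp] lemma ResData.cx_d (D : ResData (R := R) N) (i : ℕ) :
    D.cx.d (i + 1) i = D.d i := ChainComplex.of_d _ _ _

lemma ResData.d_eps_zero (D : ResData (R := R) N) : D.cx.d 1 0 ≫ D.ε = 0 := by
  rw [ResData.cx_d]
  ext x
  show D.ε (D.d 0 x) = 0
  exact D.eps_d x

/-- The augmentation chain map to the single complex. -/
noncomputable def ResData.pi (D : ResData (R := R) N) :
    D.cx ⟶ (ChainComplex.single₀ (ModuleCat.{u} R)).obj (ModuleCat.of R N) :=
  (ChainComplex.toSingle₀Equiv _ _).symm ⟨D.ε, D.d_eps_zero⟩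

@[simp] lemma ResData.pi_f_zero (D : ResData (R := R) N) : D.pi.f 0 = D.ε :=
  ChainComplex.toSingle₀Equiv_symm_apply_f_zero _ _

/-- Assemble resolution data into an actual projective resolution. -/
noncomputable def ResData.toProjectiveResolution (D : ResData (R := R) N) :
    ProjectiveResolution (ModuleCat.of R N) where
  complex := D.cx
  projective n := D.proj n
  π := D.pi
  quasiIso := ⟨fun n => by
    cases n with
    | zero =>
      rw [ChainComplex.quasiIsoAt₀_iff, ShortComplex.quasiIso_iff_of_zeros']
      · constructor
        · have hτ : ((HomologicalComplex.shortComplexFunctor' (ModuleCat.{u} R)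
              (ComplexShape.down ℕ) 1 0 0).map D.pi).τ₂ = D.ε := D.pi_f_zero
          rw [ShortComplex.moduleCat_exact_iff]
          intro x₂ hx₂
          -- x₂ : D.cx.X 0 with ε x₂ = 0
          have : D.ε x₂ = 0 := by
            rw [← hτ]
            exact hx₂
          have hx : x₂ ∈ LinearMap.range (D.d 0).hom := by rw [← D.ker0]; exact this
          obtain ⟨y, hy⟩ := hx
          exact ⟨y, hy⟩
        · rw [ModuleCat.epi_iff_surjective]
          intro y
          obtain ⟨x, hx⟩ := D.surj y
          exact ⟨x, by
            show D.pi.f 0 x = y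
            rw [ResData.pi_f_zero]
            exact hx⟩
      · rfl
      · rfl
      · rfl
    | succ n =>
      rw [quasiIsoAt_iff_exactAt' _ _ (ChainComplex.exactAt_succ_single_obj _ _)]
      rw [HomologicalComplex.exactAt_iff' _ (n + 2) (n + 1) n (by simp) (by simp)]
      rw [ShortComplex.moduleCat_exact_iff_range_eq_ker]
      show LinearMap.range (D.cx.d (n + 2) (n + 1)).hom = LinearMap.ker (D.cx.d (n + 1) n).hom
      rw [ResData.cx_d, ResData.cx_d]
      exact (D.exact n).symm⟩

end Statement13
namespace Statement13

open CategoryTheory Limits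

variable {R : Type u} [CommRing R]
variable {N : Type u} [AddCommGroup N] [Module R N]

/-- Extract concrete resolution data from a categorical projective resolution. -/
noncomputable def ResData.ofProjectiveResolution
    (P : ProjectiveResolution (ModuleCat.of R N)) : ResData (R := R) N where
  A i := P.complex.X i
  d i := P.complex.d (i + 1) i
  ε := P.π.f 0 ≫ (HomologicalComplex.singleObjXSelf (ComplexShape.down ℕ) 0
        (ModuleCat.of R N)).hom
  proj i := inferInstance
  surj := by
    rw [← ModuleCat.epi_iff_surjective]
    infer_instance
  ker0 := by
    have h := (ShortComplex.moduleCat_exact_iff_range_eq_ker _).1 P.exact₀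
    have hker : LinearMap.ker (P.π.f 0 ≫ (HomologicalComplex.singleObjXSelf
        (ComplexShape.down ℕ) 0 (ModuleCat.of R N)).hom).hom = LinearMap.ker (P.π.f 0).hom := by
      ext x
      constructor
      · intro hx
        have : (HomologicalComplex.singleObjXSelf (ComplexShape.down ℕ) 0
            (ModuleCat.of R N)).hom (P.π.f 0 x) = 0 := hx
        have hinj : Function.Injective ((HomologicalComplex.singleObjXSelf
            (ComplexShape.down ℕ) 0 (ModuleCat.of R N)).hom) := by
          rw [← ModuleCat.mono_iff_injective]
          infer_instance
        exact LinearMap.mem_ker.2 (hinj (this.trans (map_zero _).symm))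
      · intro hx
        show (HomologicalComplex.singleObjXSelf (ComplexShape.down ℕ) 0
            (ModuleCat.of R N)).hom (P.π.f 0 x) = 0
        rw [LinearMap.mem_ker.1 hx]
        exact map_zero _
    rw [hker, ← h]
  exact i := ((ShortComplex.moduleCat_exact_iff_range_eq_ker _).1 (P.exact_succ i)).symm

lemma pdLE_of_hasProjDimLE (q : ℕ) (h : HasProjDimLE R N q) : pdLE R q N := by
  obtain ⟨P, hP⟩ := h
  refine ⟨ResData.ofProjectiveResolution P, fun i hi => ?_⟩
  exact subsingleton_of_isZero (hP i hi)

end Statement13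
namespace Statement13

open CategoryTheory Limits

variable (R : Type u) [CommRing R]

noncomputable def coverN (Y : Type u) [AddCommGroup Y] [Module R Y] [Module.Finite R Y] : ℕ :=
  (Module.Finite.exists_fin' R Y).choose

noncomputable def coverMap (Y : Type u) [AddCommGroup Y] [Module R Y] [Module.Finite R Y] :
    (Fin (coverN R Y) → R) →ₗ[R] Y :=
  (Module.Finite.exists_fin' R Y).choose_spec.choose

lemma coverMap_surj (Y : Type u) [AddCommGroup Y] [Module R Y] [Module.Finite R Y] :
    Function.Surjective (coverMap R Y) :=
  (Module.Finite.exists_fin' R Y).choose_spec.choose_spec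

instance moduleFiniteOf (X : Type u) [AddCommGroup X] [Module R X] [Module.Finite R X] :
    Module.Finite R ↥(ModuleCat.of R X) := ‹Module.Finite R X›

variable [IsNoetherianRing R]

lemma finite_ker {Y : Type u} [AddCommGroup Y] [Module R Y] {n : ℕ}
    (f : (Fin n → R) →ₗ[R] Y) : Module.Finite R (LinearMap.ker f) := by
  haveI : IsNoetherian R (Fin n → R) := inferInstance
  exact Module.Finite.iff_fg.mpr (IsNoetherian.noetherian _)

variable (M : Type u) [AddCommGroup M] [Module R M] [Module.Finite R M]

/-- The sequence of successive kernels in a finite free resolution. -/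
noncomputable def stage : ∀ _ : ℕ, Σ' (Y : ModuleCat.{u} R), Module.Finite R Y
  | 0 => ⟨ModuleCat.of R M, moduleFiniteOf R M⟩
  | k + 1 =>
    let p := stage k
    letI := p.2
    ⟨ModuleCat.of R (LinearMap.ker (coverMap R p.1)),
      letI := finite_ker R (coverMap R p.1); moduleFiniteOf R _⟩

noncomputable instance stageFin (k : ℕ) : Module.Finite R ((stage R M k).1) :=
  (stage R M k).2

noncomputable def fgA (k : ℕ) : ModuleCat.{u} R :=
  ModuleCat.of R (Fin (coverN R (stage R M k).1) → R)

noncomputable def fgd (k : ℕ) : fgA R M (k + 1) ⟶ fgA R M k :=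
  ModuleCat.ofHom ((LinearMap.ker (coverMap R (stage R M k).1)).subtype ∘ₗ
    (coverMap R ((stage R M (k + 1)).1)))

lemma fgd_ker (k : ℕ) :
    LinearMap.ker (fgd R M k).hom = LinearMap.ker (coverMap R ((stage R M (k + 1)).1)) := by
  ext x
  simp only [LinearMap.mem_ker, fgd]
  constructor
  · intro h
    exact Subtype.ext h
  · intro h
    exact congrArg Subtype.val h

lemma fgd_range (k : ℕ) :
    LinearMap.range (fgd R M k).hom =
      LinearMap.ker (coverMap R ((stage R M k).1)) := by
  ext y
  constructor
  · rintro ⟨x, rfl⟩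
    exact ((coverMap R ((stage R M (k + 1)).1)) x).2
  · intro hy
    obtain ⟨x, hx⟩ := coverMap_surj R ((stage R M (k + 1)).1) ⟨y, hy⟩
    exact ⟨x, by rw [show (fgd R M k) x = ((coverMap R ((stage R M (k+1)).1)) x).1 from rfl, hx]⟩

/-- A resolution of a finitely generated module over a Noetherian ring
by finite free modules. -/
noncomputable def fgRes : ResData (R := R) M where
  A := fgA R M
  d := fgd R M
  ε := ModuleCat.ofHom (coverMap R ((stage R M 0).1))
  proj k := (IsProjective.iff_projective _).1
    (Module.Projective.of_basis (Pi.basisFun R (Fin (coverN R (stage R M k).1))))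
  surj := coverMap_surj R ((stage R M 0).1)
  ker0 := (fgd_range R M 0).symm
  exact i := (fgd_ker R M i).trans (fgd_range R M (i + 1)).symm

lemma fgRes_A (k : ℕ) :
    (fgRes R M).A k = ModuleCat.of R (Fin (coverN R (stage R M k).1) → R) := rfl

instance fgRes_finite (k : ℕ) : Module.Finite R ((fgRes R M).A k) :=
  moduleFiniteOf R (Fin (coverN R (stage R M k).1) → R)

lemma fgRes_module_projective (k : ℕ) : Module.Projective R ((fgRes R M).A k) :=
  Module.Projective.of_basis (Pi.basisFun R (Fin (coverN R (stage R M k).1)))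

end Statement13
namespace Statement13

open CategoryTheory TensorProduct

variable {R : Type u} [CommRing R]
variable (M : Type u) [AddCommGroup M] [Module R M]

lemma dth_natural {Y Z : Type u} [AddCommGroup Y] [Module R Y] [AddCommGroup Z] [Module R Z]
    (f : Y →ₗ[R] Z) (x : Module.Dual R M ⊗[R] Y) :
    dualTensorHom R M Z (f.lTensor _ x) = f ∘ₗ dualTensorHom R M Y x := by
  induction x with
  | zero => simp
  | tmul g y =>
    ext m
    simp [dualTensorHom_apply]
  | add a b ha hb =>
    simp only [map_add] at *
    rw [ha, hb]
    ext m
    simp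

lemma dth_pairing (ι : Type u) [DecidableEq ι] (x : Module.Dual R M ⊗[R] (ι →₀ R))
    (m : M) (a : ι) :
    dualTensorHom R M (ι →₀ R) x m a = finsuppScalarRight R R (Module.Dual R M) ι x a m := by
  induction x with
  | zero => rw [map_zero, map_zero]; simp
  | tmul g v =>
    rw [finsuppScalarRight_apply_tmul_apply]
    simp only [dualTensorHom_apply]
    show (g m • v) a = (v a • g) m
    simp [mul_comm]
  | add u w hu hw =>
    simp only [map_add, LinearMap.add_apply, Finsupp.add_apply] at *
    rw [hu, hw]

variable [Module.Finite R M]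

lemma dth_bij_finsupp (ι : Type u) :
    Function.Bijective (dualTensorHom R M (ι →₀ R)) := by
  classical
  constructor
  · intro x y hxy
    apply (finsuppScalarRight R R (Module.Dual R M) ι).injective
    ext a m
    rw [← dth_pairing, ← dth_pairing, hxy]
  · intro φ
    obtain ⟨n, g, hg⟩ := Module.Finite.exists_fin (R := R) (M := M)
    set J : Finset ι := Finset.biUnion Finset.univ (fun i => (φ (g i)).support) with hJ
    have hsupp : ∀ m : M, ∀ a : ι, a ∉ J → φ m a = 0 := by
      intro m a ha
      have hm : m ∈ Submodule.span R (Set.range g) := hg ▸ Submodule.mem_top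
      induction hm using Submodule.span_induction with
      | mem y hy =>
        obtain ⟨i, rfl⟩ := hy
        by_contra h
        exact ha (Finset.mem_biUnion.2 ⟨i, Finset.mem_univ i, Finsupp.mem_support_iff.2 h⟩)
      | zero => simp
      | add y z _ _ hy hz => simp [map_add, hy, hz]
      | smul c y _ hy => simp [map_smul, hy]
    set F : ι →₀ Module.Dual R M :=
      ∑ a ∈ J, Finsupp.single a ((Finsupp.lapply a) ∘ₗ φ) with hF
    have hFa : ∀ a : ι, ∀ m : M, F a m = φ m a := by
      intro a m
      by_cases ha : a ∈ J
      · rw [hF]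
        rw [Finset.sum_apply']
        rw [Finset.sum_eq_single a]
        · simp
        · intro b _ hb
          simp [Finsupp.single_apply, hb]
        · intro h
          exact absurd ha h
      · have h1 : F a = 0 := by
          rw [hF, Finset.sum_apply']
          apply Finset.sum_eq_zero
          intro b hb
          have : b ≠ a := fun h => ha (h ▸ hb)
          simp [Finsupp.single_apply, this]
        rw [h1, hsupp m a ha]
        rfl
    refine ⟨(finsuppScalarRight R R (Module.Dual R M) ι).symm F, ?_⟩
    apply LinearMap.ext
    intro m
    apply Finsupp.ext
    intro a
    rw [dth_pairing, LinearEquiv.apply_symm_apply]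
    exact hFa a m

lemma dth_bij_retract {F Q : Type u} [AddCommGroup F] [Module R F] [AddCommGroup Q] [Module R Q]
    (p : F →ₗ[R] Q) (s : Q →ₗ[R] F) (hps : p ∘ₗ s = LinearMap.id)
    (h : Function.Bijective (dualTensorHom R M F)) :
    Function.Bijective (dualTensorHom R M Q) := by
  have hps' : ∀ x : Q, p (s x) = x := fun x => congrArg (fun f => f x) hps
  constructor
  · intro x y hxy
    have h1 : dualTensorHom R M F (s.lTensor _ x) = dualTensorHom R M F (s.lTensor _ y) := by
      rw [dth_natural, dth_natural, hxy]
    have h2 := h.1 h1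
    have h3 := congrArg (p.lTensor (Module.Dual R M)) h2
    rwa [← LinearMap.comp_apply, ← LinearMap.lTensor_comp, hps, LinearMap.lTensor_id,
      LinearMap.id_apply, ← LinearMap.comp_apply, ← LinearMap.lTensor_comp, hps,
      LinearMap.lTensor_id, LinearMap.id_apply] at h3
  · intro φ
    obtain ⟨y, hy⟩ := h.2 (s ∘ₗ φ)
    refine ⟨p.lTensor _ y, ?_⟩
    rw [dth_natural, hy]
    apply LinearMap.ext
    intro m
    simp [hps']

lemma dth_bij_projective {Q : Type u} [AddCommGroup Q] [Module R Q]
    (h : Module.Projective R Q) :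
    Function.Bijective (dualTensorHom R M Q) := by
  obtain ⟨s, hs⟩ := Module.projective_def.1 h
  refine dth_bij_retract M (Finsupp.linearCombination R id) s ?_ (dth_bij_finsupp M Q)
  ext x
  exact hs x

end Statement13
namespace Statement13

open CategoryTheory TensorProduct

variable {R : Type u} [CommRing R]
variable {M : Type u} [AddCommGroup M] [Module R M]

/-- Concrete vanishing of `Ext^{k+1}(M, Y)` relative to the resolution data `G` of `M`. -/
def Evan (G : ResData (R := R) M) (k : ℕ) (Y : Type u) [AddCommGroup Y] [Module R Y] : Prop :=
  ∀ ψ : G.A (k + 1) →ₗ[R] Y, ψ ∘ₗ (G.d (k + 1)).hom = 0 →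
    ∃ χ : G.A k →ₗ[R] Y, ψ = χ ∘ₗ (G.d k).hom

variable {G : ResData (R := R) M}

lemma Evan.congr {Y Y' : Type u} [AddCommGroup Y] [Module R Y] [AddCommGroup Y'] [Module R Y']
    (e : Y ≃ₗ[R] Y') (h : Evan G k Y) : Evan G k Y' := by
  intro ψ hψ
  obtain ⟨χ, hχ⟩ := h ((e.symm : Y' →ₗ[R] Y) ∘ₗ ψ) (by
    rw [LinearMap.comp_assoc, hψ, LinearMap.comp_zero])
  refine ⟨(e : Y →ₗ[R] Y') ∘ₗ χ, ?_⟩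
  apply LinearMap.ext
  intro x
  have h1 : e.symm (ψ x) = χ (G.d k x) := congrArg (fun f => f x) hχ
  have h2 := congrArg e h1
  rw [LinearEquiv.apply_symm_apply] at h2
  simpa using h2

lemma Evan.retract {F Q : Type u} [AddCommGroup F] [Module R F] [AddCommGroup Q] [Module R Q]
    (p : F →ₗ[R] Q) (s : Q →ₗ[R] F) (hps : p ∘ₗ s = LinearMap.id)
    (h : Evan G k F) : Evan G k Q := by
  intro ψ hψ
  obtain ⟨χ, hχ⟩ := h (s ∘ₗ ψ) (by rw [LinearMap.comp_assoc, hψ, LinearMap.comp_zero])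
  refine ⟨p ∘ₗ χ, ?_⟩
  ext x
  have h1 : s (ψ x) = χ (G.d k x) := congrArg (fun f => f x) hχ
  have h2 : p (s (ψ x)) = ψ x := congrArg (fun f => f (ψ x)) hps
  simp only [LinearMap.comp_apply]
  rw [← h1, h2]

lemma Evan.finsupp (hfin : Module.Finite R (G.A (k + 1))) (ι : Type u)
    (h : Evan G k R) : Evan G k (ι →₀ R) := by
  classical
  intro ψ hψ
  -- components
  have hcomp : ∀ a : ι, ((Finsupp.lapply a : (ι →₀ R) →ₗ[R] R) ∘ₗ ψ) ∘ₗ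
      (G.d (k + 1)).hom = 0 := by
    intro a
    rw [LinearMap.comp_assoc, hψ, LinearMap.comp_zero]
  -- choice of coboundaries, zero where the component vanishes
  have hch : ∀ a : ι, ∃ χa : G.A k →ₗ[R] R,
      ((Finsupp.lapply a : (ι →₀ R) →ₗ[R] R) ∘ₗ ψ) = χa ∘ₗ (G.d k).hom ∧
      (((Finsupp.lapply a : (ι →₀ R) →ₗ[R] R) ∘ₗ ψ) = 0 → χa = 0) := by
    intro a
    by_cases h0 : ((Finsupp.lapply a : (ι →₀ R) →ₗ[R] R) ∘ₗ ψ) = 0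
    · exact ⟨0, by rw [h0]; ext x; simp, fun _ => rfl⟩
    · obtain ⟨χa, hχa⟩ := h _ (hcomp a)
      exact ⟨χa, hχa, fun hc => absurd hc h0⟩
  choose χ hχ hχ0 using hch
  -- finite support
  obtain ⟨n, g, hg⟩ := Module.Finite.exists_fin (R := R) (M := (G.A (k + 1) : Type u))
  set J : Finset ι := Finset.biUnion Finset.univ (fun i => (ψ (g i)).support) with hJ
  have hsupp : ∀ x : G.A (k + 1), ∀ a : ι, a ∉ J → ψ x a = 0 := by
    intro x a ha
    have hm : x ∈ Submodule.span R (Set.range g) := hg ▸ Submodule.mem_top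
    induction hm using Submodule.span_induction with
    | mem y hy =>
      obtain ⟨i, rfl⟩ := hy
      by_contra hcon
      exact ha (Finset.mem_biUnion.2 ⟨i, Finset.mem_univ i, Finsupp.mem_support_iff.2 hcon⟩)
    | zero => simp
    | add y z _ _ hy hz => simp [map_add, hy, hz]
    | smul c y _ hy => simp [map_smul, hy]
  have hzero : ∀ a : ι, a ∉ J → χ a = 0 := by
    intro a ha
    apply hχ0
    ext x
    simp [hsupp x a ha]
  refine ⟨∑ a ∈ J, (Finsupp.lsingle a : R →ₗ[R] (ι →₀ R)) ∘ₗ χ a, ?_⟩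
  apply LinearMap.ext
  intro x
  apply Finsupp.ext
  intro a
  have hXa : ((∑ b ∈ J, (Finsupp.lsingle b : R →ₗ[R] (ι →₀ R)) ∘ₗ χ b) ∘ₗ
      (G.d k).hom) x a
      = ∑ b ∈ J, Finsupp.single b (χ b (G.d k x)) a := by
    simp [LinearMap.sum_apply, Finsupp.finset_sum_apply]
  rw [hXa]
  by_cases ha : a ∈ J
  · rw [Finset.sum_eq_single a]
    · rw [Finsupp.single_eq_same]
      have := congrArg (fun f => f x) (hχ a)
      simpa using this
    · intro b _ hb
      exact Finsupp.single_eq_of_ne' hb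
    · intro h
      exact absurd ha h
  · rw [Finset.sum_eq_zero, hsupp x a ha]
    intro b hb
    exact Finsupp.single_eq_of_ne' (fun h => ha (h ▸ hb))

lemma Evan.projective (hfin : Module.Finite R (G.A (k + 1))) {Y : Type u}
    [AddCommGroup Y] [Module R Y] (hY : Module.Projective R Y)
    (h : Evan G k R) : Evan G k Y := by
  obtain ⟨s, hs⟩ := Module.projective_def.1 hY
  refine Evan.retract (Finsupp.linearCombination R id) s ?_ (Evan.finsupp hfin Y h)
  ext x
  exact hs x

/-- A module with a bounded-by-0 resolution is equivalent to a projective module. -/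
lemma pdLE_zero_equiv {Q : Type u} [AddCommGroup Q] [Module R Q]
    (D : ResData (R := R) Q) (hD : D.Bounded 0) :
    Function.Bijective (D.ε).hom := by
  constructor
  · intro x y hxy
    have hsub : Subsingleton (D.A 1) := hD 1 le_rfl
    have : x - y ∈ LinearMap.ker (D.ε).hom := by
      simp [LinearMap.mem_ker, map_sub, hxy]
    rw [D.ker0] at this
    obtain ⟨z, hz⟩ := this
    have : z = 0 := Subsingleton.elim _ _
    rw [this, map_zero] at hz
    have : x - y = 0 := hz.symm
    exact sub_eq_zero.1 this
  · exact D.surj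

lemma module_projective_of_cat {X : ModuleCat.{u} R} (h : Projective X) :
    Module.Projective R X :=
  (IsProjective.iff_projective X).2 h

/-- Theorem B: concrete Ext vanishing for modules of finite projective dimension. -/
lemma thmB (s : ℕ) (hfin : ∀ i, Module.Finite R (G.A i))
    (hER : ∀ k, k + 1 ≤ s → Evan G k R) :
    ∀ q (Y : Type u) [AddCommGroup Y] [Module R Y], pdLE R q Y →
      ∀ k, k + 1 + q ≤ s → Evan G k Y := by
  intro q
  induction q with
  | zero =>
    intro Y _ _ hY k hk
    obtain ⟨D, hD⟩ := hY
    have hbij := pdLE_zero_equiv D hD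
    have e : (D.A 0 : Type u) ≃ₗ[R] Y := LinearEquiv.ofBijective _ hbij
    have hproj : Module.Projective R (D.A 0) := module_projective_of_cat (D.proj 0)
    exact Evan.congr e (Evan.projective (hfin (k + 1)) hproj (hER k (by omega)))
  | succ q IH =>
    intro Y _ _ hY k hk
    obtain ⟨D, hD⟩ := hY
    intro ψ hψ
    -- lift ψ through D.ε
    have hproj1 : Module.Projective R (G.A (k + 1)) := module_projective_of_cat (G.proj (k + 1))
    obtain ⟨ψt, hψt⟩ := Module.projective_lifting_property
      (D.ε).hom ψ D.surj
    -- the obstruction cocycle with values in K = ker ε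
    set K := LinearMap.ker (D.ε).hom with hK
    have hmem : ∀ x : G.A (k + 2), (ψt ∘ₗ (G.d (k + 1)).hom) x ∈ K := by
      intro x
      rw [hK, LinearMap.mem_ker]
      have h1 : D.ε (ψt (G.d (k + 1) x)) = ψ (G.d (k + 1) x) :=
        congrArg (fun f => f (G.d (k + 1) x)) hψt
      rw [LinearMap.comp_apply, h1]
      exact congrArg (fun f => f x) hψ
    set χ : G.A (k + 2) →ₗ[R] K :=
      (ψt ∘ₗ (G.d (k + 1)).hom).codRestrict K hmem with hχdef
    have hχcocycle : χ ∘ₗ (G.d (k + 2)).hom = 0 := by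
      apply LinearMap.ext
      intro x
      apply Subtype.ext
      show ψt (G.d (k + 1) (G.d (k + 2) x)) = 0
      rw [G.d_d (k + 1) x, map_zero]
    -- IH at K
    have hKpd : pdLE R q K := pdLE_shift D hD
    have hEK : Evan G (k + 1) K := IH K hKpd (k + 1) (by omega)
    obtain ⟨θ, hθ⟩ := hEK χ hχcocycle
    -- corrected lift is a cocycle in the projective D.A 0
    set ρ : G.A (k + 1) →ₗ[R] D.A 0 := ψt - K.subtype ∘ₗ θ with hρ
    have hρc : ρ ∘ₗ (G.d (k + 1)).hom = 0 := by
      ext x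
      have h1 : χ x = θ (G.d (k + 1) x) := congrArg (fun f => f x) hθ
      have h2 : (χ x : D.A 0) = ψt (G.d (k + 1) x) := rfl
      show ψt (G.d (k + 1) x) - (θ (G.d (k + 1) x) : D.A 0) = 0
      rw [← h1, ← h2, sub_self]
    have hproj0 : Module.Projective R (D.A 0) := module_projective_of_cat (D.proj 0)
    have hEA0 : Evan G k (D.A 0) :=
      Evan.projective (hfin (k + 1)) hproj0 (hER k (by omega))
    obtain ⟨σ, hσ⟩ := hEA0 ρ hρc
    refine ⟨(D.ε).hom ∘ₗ σ, ?_⟩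
    ext x
    have h1 : ρ x = σ (G.d k x) := congrArg (fun f => f x) hσ
    have h2 : D.ε (ψt x) = ψ x := congrArg (fun f => f x) hψt
    show ψ x = D.ε (σ (G.d k x))
    rw [← h1, hρ]
    simp only [LinearMap.sub_apply, map_sub, LinearMap.comp_apply]
    rw [h2]
    have h4 : D.ε ((K.subtype) (θ x)) = 0 := (θ x).2
    rw [h4, sub_zero]

/-- Lifting lemma: maps from `M` lift along surjections whose kernel has
vanishing `Ext^1`. -/
lemma lift_of_evan {B Q : Type u} [AddCommGroup B] [Module R B] [AddCommGroup Q] [Module R Q]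
    (p : B →ₗ[R] Q) (hp : Function.Surjective p)
    (hE : Evan G 0 (LinearMap.ker p)) (φ : M →ₗ[R] Q) :
    ∃ β : M →ₗ[R] B, p ∘ₗ β = φ := by
  have hproj0 : Module.Projective R (G.A 0) := module_projective_of_cat (G.proj 0)
  obtain ⟨α, hα⟩ := Module.projective_lifting_property p (φ ∘ₗ (G.ε).hom) hp
  set K := LinearMap.ker p with hKdef
  have hmem : ∀ x : G.A 1, (α ∘ₗ (G.d 0).hom) x ∈ K := by
    intro x
    rw [hKdef, LinearMap.mem_ker]
    have h1 : p (α (G.d 0 x)) = φ (G.ε (G.d 0 x)) := congrArg (fun f => f (G.d 0 x)) hα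
    rw [LinearMap.comp_apply, h1, G.eps_d x, map_zero]
  set χ : G.A 1 →ₗ[R] K := (α ∘ₗ (G.d 0).hom).codRestrict K hmem with hχdef
  have hχc : χ ∘ₗ (G.d 1).hom = 0 := by
    apply LinearMap.ext
    intro x
    apply Subtype.ext
    show α (G.d 0 (G.d 1 x)) = 0
    rw [G.d_d 0 x, map_zero]
  obtain ⟨θ, hθ⟩ := hE χ hχc
  set β' : G.A 0 →ₗ[R] B := α - K.subtype ∘ₗ θ with hβ'
  have hβ'd : ∀ x : G.A 1, β' (G.d 0 x) = 0 := by
    intro x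
    have h1 : χ x = θ (G.d 0 x) := congrArg (fun f => f x) hθ
    have h2 : (χ x : B) = α (G.d 0 x) := rfl
    show α (G.d 0 x) - (θ (G.d 0 x) : B) = 0
    rw [← h1, ← h2, sub_self]
  have hle : LinearMap.ker (G.ε).hom ≤ LinearMap.ker β' := by
    intro x hx
    rw [G.ker0] at hx
    obtain ⟨y, rfl⟩ := hx
    exact LinearMap.mem_ker.2 (hβ'd y)
  set e := (G.ε).hom.quotKerEquivOfSurjective G.surj with he
  refine ⟨(LinearMap.ker (G.ε).hom).liftQ β' hle ∘ₗ e.symm.toLinearMap, ?_⟩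
  have key : ∀ x : G.A 0,
      ((LinearMap.ker (G.ε).hom).liftQ β' hle ∘ₗ e.symm.toLinearMap)
        (G.ε x) = β' x := by
    intro x
    have h1 : (e.symm.toLinearMap) (G.ε x) =
        Submodule.Quotient.mk (p := LinearMap.ker (G.ε).hom) x := by
      apply e.injective
      show e (e.symm (G.ε x)) = _
      rw [LinearEquiv.apply_symm_apply]
      rfl
    rw [LinearMap.comp_apply, h1]
    rfl
  ext m
  obtain ⟨x, rfl⟩ := G.surj m
  refine Eq.trans (congrArg p (key x)) ?_
  have h1 : p (α x) = φ (G.ε x) := congrArg (fun f => f x) hα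
  show p (α x - K.subtype (θ x)) = φ (G.ε x)
  rw [map_sub, h1]
  have h2 : p (K.subtype (θ x)) = 0 := (θ x).2
  rw [h2, sub_zero]

end Statement13
namespace Statement13

open CategoryTheory TensorProduct

variable {R : Type u} [CommRing R]
variable {M : Type u} [AddCommGroup M] [Module R M] [Module.Finite R M]
variable {G : ResData (R := R) M}

/-- Theorem A: `dualTensorHom` is bijective for modules of finite projective
dimension, given vanishing of the relevant `Ext`s. -/
lemma thmA (s : ℕ) (hfin : ∀ i, Module.Finite R (G.A i))
    (hER : ∀ k, k + 1 ≤ s → Evan G k R) :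
    ∀ q, q ≤ s → ∀ (Q : Type u) [AddCommGroup Q] [Module R Q], pdLE R q Q →
      Function.Bijective (dualTensorHom R M Q) := by
  intro q
  induction q with
  | zero =>
    intro _ Q _ _ hQ
    obtain ⟨D, hD⟩ := hQ
    have hbij := pdLE_zero_equiv D hD
    have hproj : Module.Projective R (D.A 0) := module_projective_of_cat (D.proj 0)
    have e : (D.A 0 : Type u) ≃ₗ[R] Q := LinearEquiv.ofBijective _ hbij
    exact dth_bij_retract M (e : (D.A 0 : Type u) →ₗ[R] Q) (e.symm : Q →ₗ[R] (D.A 0 : Type u))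
      (by ext x; simp) (dth_bij_projective M hproj)
  | succ q IH =>
    intro hq Q _ _ hQ
    obtain ⟨D, hD⟩ := hQ
    set K := LinearMap.ker D.eps with hK
    have hKpd : pdLE R q K := pdLE_shift D hD
    have IHK : Function.Bijective (dualTensorHom R M K) := IH (by omega) K hKpd
    have hproj0 : Module.Projective R (D.A 0) := module_projective_of_cat (D.proj 0)
    have hP0 : Function.Bijective (dualTensorHom R M (D.A 0)) := dth_bij_projective M hproj0
    have hE1K : Evan G 0 K := thmB s hfin hER q K hKpd 0 (by omega)
    have hp : Function.Surjective D.eps := D.surj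
    constructor
    · -- injectivity
      intro x y hxy
      -- reduce to x - y in the kernel
      suffices hinj : ∀ z : Module.Dual R M ⊗[R] Q, dualTensorHom R M Q z = 0 → z = 0 by
        have : dualTensorHom R M Q (x - y) = 0 := by rw [map_sub, hxy, sub_self]
        have := hinj _ this
        exact sub_eq_zero.1 this
      intro z hz
      have hsurj : Function.Surjective
          (D.eps.lTensor (Module.Dual R M)) :=
        LinearMap.lTensor_surjective _ hp
      obtain ⟨y0, hy0⟩ := hsurj z
      set B := dualTensorHom R M (D.A 0) y0 with hB
      have hpB : D.eps ∘ₗ B = 0 := by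
        have h1 := dth_natural M D.eps y0
        rw [hy0, hz] at h1
        exact h1.symm
      have hmem : ∀ m : M, B m ∈ K := fun m =>
        LinearMap.mem_ker.2 (congrArg (fun f => f m) hpB)
      set B' : M →ₗ[R] K := B.codRestrict K hmem with hB'
      obtain ⟨zK, hzK⟩ := IHK.2 B'
      have h2 : dualTensorHom R M (D.A 0) ((K.subtype).lTensor _ zK) = B := by
        rw [dth_natural, hzK]
        ext m
        rfl
      have h3 : (K.subtype).lTensor (Module.Dual R M) zK = y0 := hP0.1 (by rw [h2, hB])
      have h4 : z = (D.eps ∘ₗ K.subtype).lTensor (Module.Dual R M) zK := by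
        rw [LinearMap.lTensor_comp, LinearMap.comp_apply, h3, hy0]
      have h5 : D.eps ∘ₗ K.subtype = 0 := by
        ext k
        exact k.2
      rw [h4, h5]
      simp
    · -- surjectivity
      intro φ
      obtain ⟨β, hβ⟩ := lift_of_evan D.eps hp hE1K φ
      obtain ⟨y, hy⟩ := hP0.2 β
      refine ⟨D.eps.lTensor _ y, ?_⟩
      rw [dth_natural, hy, hβ]

end Statement13
namespace Statement13

open CategoryTheory TensorProduct

variable {R : Type u} [CommRing R]

lemma subsingleton_tensor {X Y : Type u} [AddCommGroup X] [Module R X]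
    [AddCommGroup Y] [Module R Y] (h : Subsingleton Y) : Subsingleton (X ⊗[R] Y) := by
  refine subsingleton_of_forall_eq 0 (fun z => ?_)
  induction z with
  | zero => rfl
  | tmul x y =>
    have : y = 0 := Subsingleton.elim y 0
    rw [this, TensorProduct.tmul_zero]
  | add a b ha hb => rw [ha, hb, add_zero]

variable {M : Type u} [AddCommGroup M] [Module R M] [Module.Finite R M]
variable {G : ResData (R := R) M}

lemma tensor_exact_core (s : ℕ) (hfin : ∀ i, Module.Finite R (G.A i))
    (hER : ∀ k, k + 1 ≤ s → Evan G k R)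
    {N : Type u} [AddCommGroup N] [Module R N] (D : ResData (R := R) N)
    (hD : D.Bounded s) (j : ℕ) :
    ∀ x : Module.Dual R M ⊗[R] (D.A (j + 1) : Type u),
      (D.d j).hom.lTensor (Module.Dual R M) x = 0 →
      ∃ y : Module.Dual R M ⊗[R] (D.A (j + 2) : Type u),
        (D.d (j + 1)).hom.lTensor
          (Module.Dual R M) y = x := by
  intro x hx
  by_cases hj : j < s
  · set K := LinearMap.range (D.d j).hom with hKdef
    have hsyz : pdLE R (s - (j + 1)) K := pdLE_syzygy j D s hD hj
    have hdthK : Function.Bijective (dualTensorHom R M K) :=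
      thmA s hfin hER (s - (j + 1)) (by omega) K hsyz
    set c : (D.A (j + 1) : Type u) →ₗ[R] K :=
      (D.d j).hom.codRestrict K
        (fun z => ⟨z, rfl⟩) with hcdef
    have hinclc : K.subtype ∘ₗ c =
        (D.d j).hom := by
      ext z; rfl
    have h1 : (K.subtype.lTensor (Module.Dual R M)) ((c.lTensor _) x) = 0 := by
      rw [← LinearMap.comp_apply, ← LinearMap.lTensor_comp, hinclc]
      exact hx
    have hinj : ∀ z : Module.Dual R M ⊗[R] K,
        K.subtype.lTensor (Module.Dual R M) z = 0 → z = 0 := by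
      intro z hz
      have h2 : dualTensorHom R M (D.A j) ((K.subtype.lTensor _) z) =
          K.subtype ∘ₗ dualTensorHom R M K z := dth_natural M _ z
      rw [hz, map_zero] at h2
      have h3 : dualTensorHom R M K z = 0 := by
        apply LinearMap.ext
        intro m
        apply Subtype.ext
        have := congrArg (fun f => f m) h2
        simpa using this.symm
      have h4 : dualTensorHom R M K z = dualTensorHom R M K 0 := by rw [h3, map_zero]
      exact hdthK.1 h4
    have h5 : (c.lTensor (Module.Dual R M)) x = 0 := hinj _ h1
    have hexact : Function.Exact
        ((D.d (j + 1)).hom) c := by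
      intro y
      constructor
      · intro hy
        have : (D.d j) y = 0 := congrArg Subtype.val hy
        have hmem : y ∈ LinearMap.ker (D.d j).hom := this
        rw [D.exact j] at hmem
        exact hmem
      · rintro ⟨w, rfl⟩
        apply Subtype.ext
        show (D.d j) ((D.d (j + 1)) w) = 0
        exact D.d_d j w
    have hcsurj : Function.Surjective c := by
      rintro ⟨_, w, rfl⟩
      exact ⟨w, rfl⟩
    have := lTensor_exact (Module.Dual R M) hexact hcsurj
    exact (this x).1 h5
  · have hsub : Subsingleton ((D.A (j + 1) : Type u)) := hD (j + 1) (by omega)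
    have : Subsingleton (Module.Dual R M ⊗[R] (D.A (j + 1) : Type u)) :=
      subsingleton_tensor hsub
    exact ⟨0, by rw [map_zero]; exact Subsingleton.elim _ _⟩

end Statement13
namespace Statement13

open CategoryTheory Limits MonoidalCategory TensorProduct

variable {R : Type u} [CommRing R]
variable {M : Type u} [AddCommGroup M] [Module R M] [Module.Finite R M]
variable {G : ResData (R := R) M}

/-- The Tor vanishing, via a chosen concrete resolution. -/
lemma torVanish_of_resdata (s : ℕ) (hfin : ∀ i, Module.Finite R (G.A i))
    (hER : ∀ k, k + 1 ≤ s → Evan G k R)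
    {N : Type u} [AddCommGroup N] [Module R N] (D : ResData (R := R) N)
    (hD : D.Bounded s) (j : ℕ) :
    torVanish R (M →ₗ[R] R) N (j + 1) := by
  set X : ModuleCat.{u} R := ModuleCat.of R (M →ₗ[R] R) with hX
  set F : ModuleCat.{u} R ⥤ ModuleCat.{u} R := (tensoringLeft (ModuleCat.{u} R)).obj X with hF
  have e := (D.toProjectiveResolution).isoLeftDerivedObj F (j + 1)
  set CC := (F.mapHomologicalComplex (ComplexShape.down ℕ)).obj
    (D.toProjectiveResolution).complex with hCC
  have hexact : CC.ExactAt (j + 1) := by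
    rw [HomologicalComplex.exactAt_iff' CC (j + 2) (j + 1) j (by simp) (by simp)]
    rw [ShortComplex.moduleCat_exact_iff]
    intro x₂ hx₂
    have hg : (CC.sc' (j + 2) (j + 1) j).g x₂ =
        ((D.d j).hom.lTensor (M →ₗ[R] R)) x₂ := by
      show (F.map (D.cx.d (j + 1) j)) x₂ = _
      rw [D.cx_d]
      rfl
    rw [hg] at hx₂
    obtain ⟨y, hy⟩ := tensor_exact_core s hfin hER D hD j x₂ hx₂
    refine ⟨y, ?_⟩
    show (F.map (D.cx.d (j + 2) (j + 1))) y = x₂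
    rw [D.cx_d]
    exact hy
  have hz : IsZero (CC.homology (j + 1)) :=
    (HomologicalComplex.exactAt_iff_isZero_homology _ _).1 hexact
  have hzero : IsZero ((F.leftDerived (j + 1)).obj (ModuleCat.of R N)) :=
    IsZero.of_iso hz e
  exact subsingleton_of_isZero hzero

/-- Concrete Ext vanishing from the abstract one. -/
lemma evan_of_extVanish (k : ℕ) (h : extVanish R M R (k + 1)) : Evan G k R := by
  haveI := h
  have hzsrc : IsZero (((Ext R (ModuleCat.{u} R) (k + 1)).obj
      (Opposite.op (ModuleCat.of R M))).obj (ModuleCat.of R R)) :=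
    ModuleCat.isZero_of_subsingleton _
  have e := (G.toProjectiveResolution).isoExt (R := R) (k + 1) (ModuleCat.of R R)
  set YC := ((G.toProjectiveResolution).complex.linearYonedaObj R (ModuleCat.of R R)) with hYC
  have hz : IsZero (YC.homology (k + 1)) := IsZero.of_iso hzsrc e.symm
  have hexact : YC.ExactAt (k + 1) :=
    (HomologicalComplex.exactAt_iff_isZero_homology _ _).2 hz
  rw [HomologicalComplex.exactAt_iff' YC k (k + 1) (k + 2) (by simp) (by simp)] at hexact
  rw [ShortComplex.moduleCat_exact_iff] at hexact
  intro ψ hψ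
  have hg : (YC.sc' k (k + 1) (k + 2)).g (ModuleCat.ofHom ψ) =
      ModuleCat.ofHom (ψ ∘ₗ (G.cx.d (k + 2) (k + 1)).hom) := rfl
  rw [G.cx_d] at hg
  obtain ⟨χ, hχ⟩ := hexact (ModuleCat.ofHom ψ) (by rw [hg]; exact congrArg ModuleCat.ofHom hψ)
  have hf : (YC.sc' k (k + 1) (k + 2)).f χ =
      ModuleCat.ofHom ((ModuleCat.Hom.hom χ) ∘ₗ (G.cx.d (k + 1) k).hom) := rfl
  rw [G.cx_d] at hf
  rw [hf] at hχ
  exact ⟨ModuleCat.Hom.hom χ, (congrArg ModuleCat.Hom.hom hχ).symm⟩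

end Statement13

open Statement13

/-- Let `R` be Noetherian local of depth `t`, `0 ≤ r ≤ t`, with
`Ext_R^i(M, R) = 0` for `1 ≤ i ≤ t − r` when `r < t`, and let `N ≠ 0` be finitely generated
with `pd_R N ≤ t − r`. Then `Tor_j^R(Hom_R(M, R), N) = 0` for all `j > 0` and the natural
evaluation map `Hom_R(M, R) ⊗_R N → Hom_R(M, N)` is an isomorphism. -/
theorem statement_13 (R : Type u) [CommRing R] [IsNoetherianRing R] [IsLocalRing R]
    (t : ℕ) (ht : moduleDepth R R = (t : ℕ∞))
    (M : Type u) [AddCommGroup M] [Module R M] [Module.Finite R M]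
    (r : ℕ) (hrt : r ≤ t)
    (hext : r < t → ∀ i, 1 ≤ i → i ≤ t - r → extVanish R M R i)
    (N : Type u) [AddCommGroup N] [Module R N] [Module.Finite R N] [Nontrivial N]
    (hpdN : HasProjDimLE R N (t - r)) :
    (∀ j : ℕ, 0 < j → torVanish R (M →ₗ[R] R) N j) ∧
      Function.Bijective (dualTensorHom R M N) := by
  classical
  set s := t - r with hs
  have hfin : ∀ i, Module.Finite R ((fgRes R M).A i) := fun i => fgRes_finite R M i
  have hER : ∀ k, k + 1 ≤ s → Evan (fgRes R M) k R := by
    intro k hk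
    have hrt' : r < t := by omega
    exact evan_of_extVanish k (hext hrt' (k + 1) (by omega) (by omega))
  obtain ⟨D, hD⟩ := pdLE_of_hasProjDimLE s hpdN
  constructor
  · intro j hj
    obtain ⟨jj, rfl⟩ : ∃ jj, j = jj + 1 := ⟨j - 1, by omega⟩
    exact torVanish_of_resdata s hfin hER D hD jj
  · exact thmA s hfin hER s le_rfl N ⟨D, hD⟩
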